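/- Let n ≥ 0 and let M be a real symmetric (n+1)×(n+1) matrix, with rows and columns indexed by 0, 1, …, n. Assume that the n×n principal submatrix of M obtained by deleting row 0 and column 0 is negative definite, and that there exists a vector v ∈ ℝ^{n+1} with vᵀMv > 0. Then (−1)ⁿ·det(M) > 0; that is, det(M) > 0 if n is even and det(M) < 0 if n is odd. -/

import Mathlib

open Matrix

/-- If the principal submatrix of a real symmetric `(n+1)×(n+1)` matrix `M`
obtained by deleting row and column `0` is negative definite, and some vector has positive
`M`-self-intersection, then `(-1)^n * det M > 0`. -/
theorem det_sign_of_negDef_submatrix (n : ℕ)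
    (M : Matrix (Fin (n + 1)) (Fin (n + 1)) ℝ)
    (hsymm : M.IsSymm)
    (hnegdef : ∀ x : Fin n → ℝ, x ≠ 0 →
      x ⬝ᵥ (M.submatrix Fin.succ Fin.succ).mulVec x < 0)
    (hpos : ∃ v : Fin (n + 1) → ℝ, 0 < v ⬝ᵥ M.mulVec v) :
    0 < (-1 : ℝ) ^ n * M.det := by
  obtain ⟨v, hv⟩ := hpos
  set N := M.submatrix Fin.succ Fin.succ with hNdef
  -- symmetry of N
  have hNsymm : Nᵀ = N := by
    ext i j
    simp [hNdef, hsymm.apply]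
  -- -N is positive definite
  have hnegsemi : ∀ x : Fin n → ℝ, x ⬝ᵥ N *ᵥ x ≤ 0 := by
    intro x
    by_cases hx : x = 0
    · simp [hx]
    · exact le_of_lt (hnegdef x hx)
  have hP : (-N).PosDef := by
    refine posDef_iff_dotProduct_mulVec.mpr ⟨?_, fun x hx => ?_⟩
    · have hNh : Nᴴ = N := by
        ext i j
        simpa [conjTranspose_apply] using congrFun (congrFun hNsymm i) j
      unfold Matrix.IsHermitian
      rw [conjTranspose_neg, hNh]
    · have := hnegdef x hx
      simp only [neg_mulVec, dotProduct_neg, star_trivial]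
      linarith
  have hdetP : 0 < (-N).det := hP.det_pos
  have hdetNeq : (-N).det = (-1 : ℝ) ^ n * N.det := by
    rw [det_neg]; simp
  have hdetN : (-1 : ℝ) ^ n * N.det > 0 := by rw [← hdetNeq]; exact hdetP
  have hNunit : IsUnit N.det := by
    apply isUnit_of_mul_isUnit_left (y := (-1 : ℝ) ^ n)
    rw [mul_comm]
    exact (ne_of_gt hdetN).isUnit
  have hNinv : N * N⁻¹ = 1 := mul_nonsing_inv N hNunit
  -- notation
  set a := M 0 0 with ha
  set c : Fin n → ℝ := fun j => M 0 j.succ with hc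
  have hcol : ∀ i : Fin n, M i.succ 0 = c i := fun i => hsymm.apply 0 i.succ
  set w : Fin n → ℝ := N⁻¹ *ᵥ c with hw
  have hNw : N *ᵥ w = c := by
    rw [hw, mulVec_mulVec, hNinv, one_mulVec]
  set s := a - c ⬝ᵥ w with hs
  -- quadratic expansion
  have expand : ∀ u : Fin (n + 1) → ℝ, u ⬝ᵥ M *ᵥ u =
      a * (u 0 * u 0) + 2 * u 0 * (c ⬝ᵥ (u ∘ Fin.succ))
        + (u ∘ Fin.succ) ⬝ᵥ N *ᵥ (u ∘ Fin.succ) := by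
    intro u
    simp only [dotProduct, mulVec, Fin.sum_univ_succ, hNdef, submatrix_apply,
      Function.comp_apply]
    have h1 : ∀ i : Fin n, u i.succ * (M i.succ 0 * u 0 + ∑ j : Fin n, M i.succ j.succ * u j.succ)
        = (M 0 i.succ * u i.succ) * u 0 + u i.succ * ∑ j : Fin n, M i.succ j.succ * u j.succ := by
      intro i
      rw [hcol i]
      simp only [hc]
      ring
    rw [Finset.sum_congr rfl fun i _ => h1 i, Finset.sum_add_distrib, ← Finset.sum_mul]
    simp only [hc, ha]
    ring
  -- key inequality ⇒ s > 0
  have hw_sym : ∀ x : Fin n → ℝ, w ⬝ᵥ N *ᵥ x = c ⬝ᵥ x := by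
    intro x
    rw [dotProduct_mulVec, ← hNsymm, vecMul_transpose, hNw]
  have hspos : 0 < s := by
    set t := v 0 with ht
    set x : Fin n → ℝ := v ∘ Fin.succ with hx
    set y : Fin n → ℝ := x + t • w with hy
    have hyNy : y ⬝ᵥ N *ᵥ y = x ⬝ᵥ N *ᵥ x + 2 * t * (c ⬝ᵥ x) + t ^ 2 * (c ⬝ᵥ w) := by
      have e1 : N *ᵥ y = N *ᵥ x + t • c := by
        rw [hy, mulVec_add, mulVec_smul, hNw]
      rw [hy, e1, add_dotProduct, dotProduct_add, dotProduct_add,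
        smul_dotProduct, smul_dotProduct, dotProduct_smul, dotProduct_smul,
        hw_sym x]
      have e2 : x ⬝ᵥ c = c ⬝ᵥ x := dotProduct_comm x c
      have e3 : w ⬝ᵥ c = c ⬝ᵥ w := dotProduct_comm w c
      simp only [smul_eq_mul, e2, e3]
      ring
    have hvMv : v ⬝ᵥ M *ᵥ v = t ^ 2 * s + y ⬝ᵥ N *ᵥ y := by
      rw [expand v, hyNy, hs]
      ring
    have h1 : y ⬝ᵥ N *ᵥ y ≤ 0 := hnegsemi y
    have h2 : 0 < t ^ 2 * s := by
      rw [hvMv] at hv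
      linarith
    nlinarith [sq_nonneg t]
  -- block determinant
  have hInv : Invertible N := invertibleOfIsUnitDet N hNunit
  let A : Matrix (Fin 1) (Fin 1) ℝ := of fun _ _ => a
  let B : Matrix (Fin 1) (Fin n) ℝ := of fun _ j => c j
  let C : Matrix (Fin n) (Fin 1) ℝ := of fun i _ => c i
  let e : Fin 1 ⊕ Fin n ≃ Fin (n + 1) :=
    { toFun := Sum.elim (fun _ => 0) Fin.succ
      invFun := Fin.cases (Sum.inl 0) Sum.inr
      left_inv := by
        rintro (i | j)
        · simp [Subsingleton.elim i 0]
        · simp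
      right_inv := by
        intro i
        induction i using Fin.cases <;> simp }
  have hMblock : M.submatrix e e = fromBlocks A B C N := by
    ext i j
    rcases i with i | i <;> rcases j with j | j
    · simp [e, A, ha]
    · simp [e, B, hc]
    · rw [show (fromBlocks A B C N) (Sum.inr i) (Sum.inl j) = c i from rfl, ← hcol i]
      simp [e]
    · simp [e, hNdef]
  have hdetM : M.det = N.det * s := by
    have h1 : M.det = (fromBlocks A B C N).det := by
      rw [← det_submatrix_equiv_self e M, hMblock]
    rw [h1, det_fromBlocks₂₂]
    congr 1
    have hinvof : (⅟N : Matrix (Fin n) (Fin n) ℝ) = N⁻¹ := invOf_eq_nonsing_inv N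
    rw [hinvof]
    rw [det_fin_one]
    simp only [Matrix.sub_apply, mul_apply, A, B, C, of_apply]
    rw [hs]
    congr 1
    rw [hw]
    simp only [mulVec, dotProduct, Finset.mul_sum, Finset.sum_mul]
    rw [Finset.sum_comm]
    exact Finset.sum_congr rfl fun i _ => Finset.sum_congr rfl fun j _ => by ring
  rw [hdetM, ← mul_assoc]
  exact mul_pos hdetN hspos
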